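/- Let {P_k}_{k=1}^M be a complex projective 2-design in dimension d, with POVM elements Π_k = (d/M)·P_k. Let f : {1,…,M} → ℝ be any vector of relative frequencies with Σ_{k=1}^M f_k = 1, and define ρ̂ = Σ_{k=1}^M f_k·((d+1)P_k − 𝟙). Then ρ̂ solves the least-squares normal equations for the measurement map: Σ_{k=1}^M tr(Π_k ρ̂)·Π_k = Σ_{k=1}^M f_k·Π_k. -/

import Mathlib

open MeasureTheory Matrix
open scoped Kronecker ComplexOrder

/-- The spectral norm (operator norm on Euclidean space) of a complex matrix. -/
noncomputable def specNorm {m : Type*} [Fintype m] [DecidableEq m]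
    (A : Matrix m m ℂ) : ℝ :=
  ‖Matrix.toEuclideanCLM (𝕜 := ℂ) A‖

/-- The Frobenius norm `√tr(A†A)` of a complex matrix. -/
noncomputable def frobNorm {m : Type*} [Fintype m]
    (A : Matrix m m ℂ) : ℝ :=
  Real.sqrt ((Aᴴ * A).trace.re)

/-- The positive semidefinite square root (the removed Mathlib `Matrix.PosSemidef.sqrt`, with its old definition). -/
noncomputable def posSemidefSqrt {m : Type*} [Fintype m] [DecidableEq m]
    {A : Matrix m m ℂ} (hA : A.PosSemidef) : Matrix m m ℂ :=
  hA.1.eigenvectorUnitary.1 * diagonal ((↑) ∘ Real.sqrt ∘ hA.1.eigenvalues) *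
    (star hA.1.eigenvectorUnitary : Matrix m m ℂ)

/-- The trace norm `tr √(A†A)` of a complex matrix. -/
noncomputable def traceNorm {m : Type*} [Fintype m] [DecidableEq m]
    (A : Matrix m m ℂ) : ℝ :=
  (posSemidefSqrt (Matrix.posSemidef_conjTranspose_mul_self A)).trace.re

/-- The residual spectral mass `Σ_r(A)`: for a Hermitian matrix with eigenvalues
`λ₁ ≥ … ≥ λ_d`, this is `Σ_{j=r+1}^d λ_j`, i.e. the trace minus the largest possible
sum of `r` eigenvalues (junk value `0` for non-Hermitian matrices). -/
noncomputable def residualMass {m : Type*} [Fintype m] [DecidableEq m]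
    (r : ℕ) (A : Matrix m m ℂ) : ℝ :=
  if h : A.IsHermitian then
    A.trace.re - sSup {x : ℝ | ∃ s : Finset m, s.card = r ∧ x = ∑ i ∈ s, h.eigenvalues i}
  else 0

/-- A density matrix: positive semidefinite with unit trace. -/
def IsDensity {m : Type*} [Fintype m] (A : Matrix m m ℂ) : Prop :=
  A.PosSemidef ∧ A.trace = 1

/-- A rank-one orthogonal projector. -/
def IsRankOneProj {m : Type*} [Fintype m] [DecidableEq m] (P : Matrix m m ℂ) : Prop :=
  Pᴴ = P ∧ P * P = P ∧ P.rank = 1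

/-- A complex projective 2-design in dimension `d`: rank-one orthogonal projectors with
`Σ_k tr(P_k X) P_k = (M/(d(d+1))) (X + tr(X) 𝟙)` for all `X`. -/
def IsTwoDesign {d M : ℕ} (P : Fin M → Matrix (Fin d) (Fin d) ℂ) : Prop :=
  (∀ k, IsRankOneProj (P k)) ∧
  ∀ X : Matrix (Fin d) (Fin d) ℂ,
    ∑ k, (P k * X).trace • P k
      = ((M : ℂ) / ((d : ℂ) * ((d : ℂ) + 1))) • (X + X.trace • (1 : Matrix (Fin d) (Fin d) ℂ))

/-- A single-qubit complex projective 2-design. -/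
def IsQubitTwoDesign {m : ℕ} (P : Fin m → Matrix (Fin 2) (Fin 2) ℂ) : Prop :=
  (∀ k, IsRankOneProj (P k)) ∧
  ∀ X : Matrix (Fin 2) (Fin 2) ℂ,
    ∑ k, (P k * X).trace • P k
      = ((m : ℂ) / 6) • (X + X.trace • (1 : Matrix (Fin 2) (Fin 2) ℂ))

/-- `n`-fold tensor product of `2×2` matrices, as a matrix indexed by functions
`Fin n → Fin 2`, with entries `(⊗_j A_j)(x,y) = Π_j A_j (x j) (y j)`. -/
noncomputable def nKron {n : ℕ} (A : Fin n → Matrix (Fin 2) (Fin 2) ℂ) :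
    Matrix (Fin n → Fin 2) (Fin n → Fin 2) ℂ :=
  Matrix.of fun x y => ∏ j, A j (x j) (y j)

/-- Partial trace over the second tensor factor. -/
noncomputable def ptrace2 {m : Type*} [Fintype m] (A : Matrix (m × m) (m × m) ℂ) : Matrix m m ℂ :=
  Matrix.of fun a a' => ∑ b, A (a, b) (a', b)


section TraceAux
open Matrix in

private lemma eig_sq {d : ℕ} {A : Matrix (Fin d) (Fin d) ℂ} (hA : A.IsHermitian)
    (hidem : A * A = A) (i : Fin d) :
    hA.eigenvalues i = 0 ∨ hA.eigenvalues i = 1 := by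
  have hv : A *ᵥ ⇑(hA.eigenvectorBasis i) = hA.eigenvalues i • ⇑(hA.eigenvectorBasis i) :=
    hA.mulVec_eigenvectorBasis i
  have h2 : (A * A) *ᵥ ⇑(hA.eigenvectorBasis i)
      = (hA.eigenvalues i * hA.eigenvalues i) • ⇑(hA.eigenvectorBasis i) := by
    rw [← mulVec_mulVec, hv, mulVec_smul, hv, smul_smul]
  rw [hidem, hv] at h2
  have hne : ⇑(hA.eigenvectorBasis i) ≠ 0 := by
    have := hA.eigenvectorBasis.orthonormal.ne_zero i
    intro h
    apply this
    ext j
    exact congrFun h j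
  have : (hA.eigenvalues i : ℝ) * hA.eigenvalues i = hA.eigenvalues i := by
    have := sub_eq_zero.mpr h2.symm
    rw [← sub_smul] at this
    rcases smul_eq_zero.mp this with h | h
    · exact sub_eq_zero.mp h |>.symm ▸ rfl
    · exact absurd h hne
  have h' : hA.eigenvalues i * (hA.eigenvalues i - 1) = 0 := by linear_combination this
  rcases mul_eq_zero.mp h' with h | h
  · exact Or.inl h
  · exact Or.inr (by linarith)

open Matrix in
private lemma trace_rankOneProj {d : ℕ} {A : Matrix (Fin d) (Fin d) ℂ}
    (hH : Aᴴ = A) (hidem : A * A = A) (hrank : A.rank = 1) : A.trace = 1 := by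
  have hA : A.IsHermitian := hH
  -- trace = sum of eigenvalues
  have htr : A.trace = ∑ i, (hA.eigenvalues i : ℂ) := by
    conv_lhs => rw [hA.spectral_theorem]
    rw [Unitary.conjStarAlgAut_apply]
    rw [Matrix.trace_mul_cycle,
      (Matrix.mem_unitaryGroup_iff').mp (hA.eigenvectorUnitary).2, Matrix.one_mul,
      Matrix.trace_diagonal]
    rfl
  have hcard : Fintype.card {i // hA.eigenvalues i ≠ 0} = 1 := by
    rw [← hA.rank_eq_card_non_zero_eigs] at *
    exact hrank.symm ▸ rfl
  obtain ⟨i0, hi0⟩ := Fintype.card_eq_one_iff.mp hcard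
  have hval : ∀ i, hA.eigenvalues i = if i = i0.1 then 1 else 0 := by
    intro i
    by_cases h : hA.eigenvalues i = 0
    · rw [h, if_neg]
      intro he
      have : (⟨i, he ▸ i0.2⟩ : {i // hA.eigenvalues i ≠ 0}) = i0 := hi0 _
      exact absurd h (he ▸ i0.2)
    · have : (⟨i, h⟩ : {i // hA.eigenvalues i ≠ 0}) = i0 := hi0 _
      have hii : i = i0.1 := congrArg Subtype.val this
      rw [if_pos hii]
      rcases eig_sq hA hidem i with h0 | h1
      · exact absurd h0 h
      · exact h1
  rw [htr]
  have : ∑ i, (hA.eigenvalues i : ℂ) = ∑ i, (if i = i0.1 then (1:ℂ) else 0) := by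
    apply Finset.sum_congr rfl
    intro i _
    rw [hval i]
    split <;> simp
  rw [this, Finset.sum_ite_eq' Finset.univ i0.1 (fun _ => (1:ℂ))]
  simp

end TraceAux

/-- The linear estimator built from relative frequencies solves the
least-squares normal equations `Σ_k tr(Π_k ρ̂) Π_k = Σ_k f_k Π_k`. -/
theorem frequency_estimator_solves_normal_equations
    {d M : ℕ} (P : Fin M → Matrix (Fin d) (Fin d) ℂ) (hP : IsTwoDesign P)
    (Povm : Fin M → Matrix (Fin d) (Fin d) ℂ)
    (hPovm : ∀ k, Povm k = ((d : ℂ) / (M : ℂ)) • P k)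
    (f : Fin M → ℝ) (hf : ∑ k, f k = 1)
    (ρhat : Matrix (Fin d) (Fin d) ℂ)
    (hρhat : ρhat = ∑ k, (f k : ℂ) • (((d : ℂ) + 1) • P k - 1)) :
    ∑ k, (Povm k * ρhat).trace • Povm k = ∑ k, (f k : ℂ) • Povm k := by
  obtain ⟨hproj, hdes⟩ := hP
  have htr : ∀ k, (P k).trace = 1 := fun k =>
    trace_rankOneProj (hproj k).1 (hproj k).2.1 (hproj k).2.2
  by_cases hd : d = 0
  · subst hd; ext i j; exact i.elim0
  by_cases hM : M = 0
  · subst hM; simp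
  have hdC : (d:ℂ) ≠ 0 := Nat.cast_ne_zero.mpr hd
  have hMC : (M:ℂ) ≠ 0 := Nat.cast_ne_zero.mpr hM
  have hd1 : (d:ℂ) + 1 ≠ 0 := by
    intro h
    have : (d:ℂ) = -1 := by linear_combination h
    have h2 : ((d:ℝ)) = -1 := by exact_mod_cast congrArg Complex.re this
    have : (0:ℝ) ≤ (d:ℝ) := Nat.cast_nonneg d
    linarith
  have hfC : ∑ k, ((f k : ℂ)) = 1 := by
    have : ((∑ k, f k : ℝ) : ℂ) = ((1:ℝ):ℂ) := by rw [hf]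
    simpa using this
  set S := ∑ k, (f k:ℂ) • P k with hS
  have hρ : ρhat = ((d:ℂ)+1) • S - 1 := by
    rw [hρhat, hS]
    simp only [smul_sub]
    rw [Finset.sum_sub_distrib, Finset.smul_sum]
    congr 1
    · exact Finset.sum_congr rfl fun k _ => by rw [smul_smul, smul_smul, mul_comm]
    · rw [← Finset.sum_smul, hfC, one_smul]
  have hStr : S.trace = 1 := by
    rw [hS, trace_sum]
    simp only [trace_smul, htr, smul_eq_mul, mul_one]
    exact hfC
  have htrρ : ρhat.trace = 1 := by
    rw [hρ, trace_sub, trace_smul, hStr, trace_one]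
    simp only [smul_eq_mul, mul_one, Finset.card_univ, Fintype.card_fin]
    ring
  have hsum : ρhat + ρhat.trace • (1 : Matrix (Fin d) (Fin d) ℂ) = ((d:ℂ)+1) • S := by
    rw [htrρ, hρ, one_smul, sub_add_cancel]
  have key := hdes ρhat
  rw [hsum] at key
  calc ∑ k, (Povm k * ρhat).trace • Povm k
      = ((d:ℂ)/M * ((d:ℂ)/M)) • ∑ k, (P k * ρhat).trace • P k := by
        rw [Finset.smul_sum]
        refine Finset.sum_congr rfl fun k _ => ?_
        rw [hPovm k, smul_mul_assoc, trace_smul, smul_smul, smul_smul]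
        congr 1
        simp only [smul_eq_mul]
        ring
    _ = ((d:ℂ)/M * ((d:ℂ)/M)) • (((M : ℂ) / ((d : ℂ) * ((d : ℂ) + 1))) • (((d:ℂ)+1) • S)) := by
        rw [key]
    _ = ((d:ℂ)/M) • S := by
        rw [smul_smul, smul_smul]
        congr 1
        field_simp
    _ = ∑ k, (f k : ℂ) • Povm k := by
        rw [hS, Finset.smul_sum]
        refine Finset.sum_congr rfl fun k _ => ?_
        rw [hPovm k, smul_smul, smul_smul, mul_comm]
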